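/- arXiv:2405.12973 — 3 statements merged into one kernel-verified Lean document; each statement's English description precedes it below -/
import Mathlib

section
/- Let Q be a real symmetric n×n matrix and a ∈ ℝ^n a vector with aᵀQa > 0. Then the following are equivalent: (a) Q has exactly one positive eigenvalue (counted with multiplicity); (b) for every t ≥ 1 the matrix (aᵀQa)·Q − t·(Qa)(Qa)ᵀ is negative semidefinite; (c) the quadratic form x ↦ xᵀQx is negative semidefinite on the hyperplane {b ∈ ℝ^n : bᵀQa = 0}. -/
open Matrix

/-- The number of positive eigenvalues (with multiplicity) of a real symmetric matrix. -/
noncomputable def posEigCount {n : ℕ} (Q : Matrix (Fin n) (Fin n) ℝ) : ℕ :=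
  @dite _ Q.IsHermitian (Classical.dec _)
    (fun h => (Finset.univ.filter fun i => 0 < h.eigenvalues i).card)
    (fun _ => 0)

/-- A proper convex cone: a closed convex cone that is pointed and solid. -/
def IsProperCone {n : ℕ} (K : Set (Fin n → ℝ)) : Prop :=
  Convex ℝ K ∧ (∀ c : ℝ, 0 ≤ c → ∀ x ∈ K, c • x ∈ K) ∧
    IsClosed K ∧ K ∩ (-K) = {0} ∧ (interior K).Nonempty

/-- The dual cone of `K` with respect to the standard inner product. -/
def dualConeSet {n : ℕ} (K : Set (Fin n → ℝ)) : Set (Fin n → ℝ) :=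
  {y | ∀ x ∈ K, 0 ≤ y ⬝ᵥ x}

/-- The quadratic form with symmetric matrix `Q` is `K`-Lorentzian: `Q` has exactly one
positive eigenvalue and `yᵀQx > 0` for all `x, y` in the interior of `K`. -/
def IsLorentzianMatrix {n : ℕ} (K : Set (Fin n → ℝ)) (Q : Matrix (Fin n) (Fin n) ℝ) : Prop :=
  posEigCount Q = 1 ∧ ∀ x ∈ interior K, ∀ y ∈ interior K, 0 < y ⬝ᵥ (Q *ᵥ x)

/-- A nonzero `v ∈ K` spans an extreme ray of `K`. -/
def SpansExtremeRay {n : ℕ} (K : Set (Fin n → ℝ)) (v : Fin n → ℝ) : Prop :=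
  v ∈ K ∧ v ≠ 0 ∧ ∀ x ∈ K, ∀ y ∈ K, v = x + y →
    (∃ c : ℝ, 0 ≤ c ∧ x = c • v) ∧ (∃ c : ℝ, 0 ≤ c ∧ y = c • v)

section Aux
open Module Submodule

variable {n : ℕ}

private lemma sum_dot' {ι : Type*} (s : Finset ι) (f : ι → Fin n → ℝ) (v : Fin n → ℝ) :
    (∑ i ∈ s, f i) ⬝ᵥ v = ∑ i ∈ s, f i ⬝ᵥ v := by
  simp only [dotProduct, Finset.sum_apply, Finset.sum_mul]
  exact Finset.sum_comm

private lemma dot_sum' {ι : Type*} (s : Finset ι) (v : Fin n → ℝ) (f : ι → Fin n → ℝ) :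
    v ⬝ᵥ (∑ i ∈ s, f i) = ∑ i ∈ s, v ⬝ᵥ f i := by
  simp only [dotProduct, Finset.sum_apply, Finset.mul_sum]
  exact Finset.sum_comm

private lemma transpose_symm {Q : Matrix (Fin n) (Fin n) ℝ} (hQ : Q.IsHermitian) : Qᵀ = Q := by
  have := hQ.eq
  rwa [conjTranspose_eq_transpose_of_trivial] at this

private lemma herm_of_transpose {M : Matrix (Fin n) (Fin n) ℝ} (h : Mᵀ = M) : M.IsHermitian := by
  have h' : ∀ i j, M j i = M i j := fun i j => congrFun (congrFun h i) j
  ext i j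
  rw [conjTranspose_apply, star_trivial]
  exact h' i j

private lemma symmdot {Q : Matrix (Fin n) (Fin n) ℝ} (hQ : Q.IsHermitian) (x y : Fin n → ℝ) :
    x ⬝ᵥ (Q *ᵥ y) = y ⬝ᵥ (Q *ᵥ x) := by
  rw [dotProduct_mulVec, ← mulVec_transpose, transpose_symm hQ, dotProduct_comm]

private lemma pos_comb_zero {α β s t : ℝ} (hα : 0 < α) (hβ : 0 < β)
    (h : 0 = α * s ^ 2 + β * t ^ 2) : s = 0 ∧ t = 0 := by
  have hs : s ^ 2 = 0 := by nlinarith [sq_nonneg s, sq_nonneg t]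
  have ht : t ^ 2 = 0 := by nlinarith [sq_nonneg s, sq_nonneg t]
  exact ⟨sq_eq_zero_iff.mp hs, sq_eq_zero_iff.mp ht⟩

private lemma pos_comb_pos {α β s t : ℝ} (hα : 0 < α) (hβ : 0 < β)
    (h : ¬ (s = 0 ∧ t = 0)) : 0 < α * s ^ 2 + β * t ^ 2 := by
  rcases eq_or_ne s 0 with rfl | hs
  · rcases eq_or_ne t 0 with rfl | ht
    · exact absurd ⟨rfl, rfl⟩ h
    · have ht2 : 0 < t ^ 2 := by positivity
      nlinarith
  · have hs2 : 0 < s ^ 2 := by positivity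
    nlinarith [sq_nonneg t]

private lemma core {Q : Matrix (Fin n) (Fin n) ℝ} {P W : Submodule ℝ (Fin n → ℝ)}
    (hP : ∀ x ∈ P, x ≠ 0 → 0 < x ⬝ᵥ (Q *ᵥ x)) (hW : ∀ x ∈ W, x ⬝ᵥ (Q *ᵥ x) ≤ 0)
    (hd : n < finrank ℝ P + finrank ℝ W) : False := by
  have h1 := Submodule.finrank_sup_add_finrank_inf_eq P W
  have h2 : finrank ℝ ↥(P ⊔ W) ≤ n := by
    have := Submodule.finrank_le (P ⊔ W)
    simpa using this
  have h3 : 0 < finrank ℝ ↥(P ⊓ W) := by omega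
  obtain ⟨⟨x, hx⟩, hx0⟩ := Module.finrank_pos_iff_exists_ne_zero.mp h3
  have hxne : x ≠ 0 := fun h => hx0 (Subtype.ext h)
  have h4 := hP x (Submodule.mem_inf.mp hx).1 hxne
  have h5 := hW x (Submodule.mem_inf.mp hx).2
  linarith

/-- The eigenvectors of a real symmetric matrix, as honest functions. -/
private noncomputable def evec {Q : Matrix (Fin n) (Fin n) ℝ} (h : Q.IsHermitian)
    (i : Fin n) : Fin n → ℝ :=
  fun k => h.eigenvectorBasis i k

private lemma dot_eigen {Q : Matrix (Fin n) (Fin n) ℝ} (h : Q.IsHermitian) (i j : Fin n) :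
    evec h i ⬝ᵥ evec h j = if i = j then 1 else 0 := by
  have := orthonormal_iff_ite.mp h.eigenvectorBasis.orthonormal i j
  rw [← this]
  simp [evec, dotProduct, PiLp.inner_apply, RCLike.inner_apply, mul_comm]

private lemma mulvec_eigen {Q : Matrix (Fin n) (Fin n) ℝ} (h : Q.IsHermitian) (i : Fin n) :
    Q *ᵥ evec h i = h.eigenvalues i • evec h i :=
  h.mulVec_eigenvectorBasis i

private lemma mulvec_eigen_sum {Q : Matrix (Fin n) (Fin n) ℝ} (h : Q.IsHermitian)
    (c : Fin n → ℝ) :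
    Q *ᵥ (∑ i, c i • evec h i) = ∑ i, (c i * h.eigenvalues i) • evec h i := by
  have e : Q *ᵥ (∑ i, c i • evec h i) = Q.mulVecLin (∑ i, c i • evec h i) := rfl
  rw [e, map_sum]
  refine Finset.sum_congr rfl fun i _ => ?_
  rw [LinearMap.map_smul, mulVecLin_apply, mulvec_eigen h, smul_smul, mul_comm]

private lemma quad_eigen_sum {Q : Matrix (Fin n) (Fin n) ℝ} (h : Q.IsHermitian)
    (c : Fin n → ℝ) :
    (∑ i, c i • evec h i) ⬝ᵥ (Q *ᵥ (∑ i, c i • evec h i))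
      = ∑ i, h.eigenvalues i * c i ^ 2 := by
  rw [mulvec_eigen_sum, sum_dot']
  refine Finset.sum_congr rfl fun i _ => ?_
  rw [dot_sum']
  have key : ∀ j, (c i • evec h i) ⬝ᵥ ((c j * h.eigenvalues j) • evec h j)
      = if j = i then h.eigenvalues i * c i ^ 2 else 0 := by
    intro j
    rw [smul_dotProduct, dotProduct_smul, dot_eigen h]
    rcases eq_or_ne j i with rfl | hji
    · simp; ring
    · simp [hji, hji.symm]
  rw [Finset.sum_congr rfl fun j _ => key j, Finset.sum_ite_eq' Finset.univ i]
  simp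

private lemma posEigCount_eq {Q : Matrix (Fin n) (Fin n) ℝ} (h : Q.IsHermitian) :
    posEigCount Q = (Finset.univ.filter fun i => 0 < h.eigenvalues i).card := by
  simp only [posEigCount]
  rw [dif_pos h]

private lemma plane_rank (a b : Fin n → ℝ)
    (hli : ∀ s t : ℝ, s • a + t • b = 0 → s = 0 ∧ t = 0) :
    finrank ℝ (span ℝ {a, b} : Submodule ℝ (Fin n → ℝ)) = 2 := by
  have li : LinearIndependent ℝ ![a, b] := LinearIndependent.pair_iff.mpr hli
  have e : Set.range ![a, b] = {a, b} := by
    simp only [Matrix.range_cons, Matrix.range_empty, Set.union_empty, Set.union_singleton]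
    exact Set.pair_comm b a
  have := finrank_span_eq_card li
  rw [e] at this
  simpa using this

private lemma eigen_span_rank {Q : Matrix (Fin n) (Fin n) ℝ} (h : Q.IsHermitian)
    (S : Finset (Fin n)) :
    finrank ℝ (span ℝ (Set.range fun i : S => evec h i)) = S.card := by
  have li : LinearIndependent ℝ (fun i : S => evec h i) :=
    (h.eigenvectorBasis.orthonormal.linearIndependent.comp Subtype.val Subtype.val_injective).map'
      (WithLp.linearEquiv 2 ℝ (Fin n → ℝ)).toLinearMap (LinearEquiv.ker _)
  rw [finrank_span_eq_card li, Fintype.card_coe]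

private lemma eigen_span_npd {Q : Matrix (Fin n) (Fin n) ℝ} (h : Q.IsHermitian)
    (S : Finset (Fin n)) (hS : ∀ i ∈ S, h.eigenvalues i ≤ 0) :
    ∀ x ∈ span ℝ (Set.range fun i : S => evec h i), x ⬝ᵥ (Q *ᵥ x) ≤ 0 := by
  intro x hx
  obtain ⟨c, hc⟩ := mem_span_range_iff_exists_fun ℝ |>.mp hx
  set c' : Fin n → ℝ := fun i => if hi : i ∈ S then c ⟨i, hi⟩ else 0 with hc'
  have hrep : ∑ i, c' i • evec h i = x := by
    rw [← hc]
    rw [show (∑ i, c' i • evec h i) = ∑ i ∈ S, c' i • evec h i from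
      (Finset.sum_subset (Finset.subset_univ S) (fun i _ hi => by simp [hc', hi])).symm]
    rw [← Finset.sum_attach S (fun i => c' i • evec h i)]
    refine Finset.sum_congr rfl fun i _ => ?_
    simp [hc', i.2]
  rw [← hrep, quad_eigen_sum h c']
  refine Finset.sum_nonpos fun i _ => ?_
  by_cases hi : i ∈ S
  · exact mul_nonpos_of_nonpos_of_nonneg (hS i hi) (sq_nonneg _)
  · simp [hc', hi]

private lemma pair_quad {Q : Matrix (Fin n) (Fin n) ℝ} (h : Q.IsHermitian) {i j : Fin n}
    (hij : i ≠ j) (s t : ℝ) :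
    (s • evec h i + t • evec h j) ⬝ᵥ (Q *ᵥ (s • evec h i + t • evec h j))
      = h.eigenvalues i * s ^ 2 + h.eigenvalues j * t ^ 2 := by
  rw [mulVec_add, mulVec_smul, mulVec_smul, mulvec_eigen h, mulvec_eigen h]
  rw [add_dotProduct, dotProduct_add, dotProduct_add]
  simp only [smul_dotProduct, dotProduct_smul, dot_eigen h, smul_eq_mul]
  simp only [if_true, if_neg hij, if_neg (Ne.symm hij), eq_self_iff_true, mul_zero, mul_one,
    add_zero, zero_add]
  ring

private lemma ab_quad {Q : Matrix (Fin n) (Fin n) ℝ} (h : Q.IsHermitian) {a b : Fin n → ℝ}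
    (hba : b ⬝ᵥ (Q *ᵥ a) = 0) (s t : ℝ) :
    (s • a + t • b) ⬝ᵥ (Q *ᵥ (s • a + t • b))
      = (a ⬝ᵥ (Q *ᵥ a)) * s ^ 2 + (b ⬝ᵥ (Q *ᵥ b)) * t ^ 2 := by
  have hab : a ⬝ᵥ (Q *ᵥ b) = 0 := by rw [symmdot h]; exact hba
  rw [mulVec_add, mulVec_smul, mulVec_smul]
  rw [add_dotProduct, dotProduct_add, dotProduct_add]
  simp only [smul_dotProduct, dotProduct_smul, smul_eq_mul, hab, hba]
  ring

private lemma vmv_mulVec (v w x : Fin n → ℝ) :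
    vecMulVec v w *ᵥ x = (w ⬝ᵥ x) • v := by
  ext i
  simp only [mulVec, dotProduct, vecMulVec_apply, Pi.smul_apply, smul_eq_mul, Finset.sum_mul]
  exact Finset.sum_congr rfl fun j _ => by ring

private lemma Mquad (Q : Matrix (Fin n) (Fin n) ℝ) (a : Fin n → ℝ) (t : ℝ) (x : Fin n → ℝ) :
    x ⬝ᵥ ((-((a ⬝ᵥ (Q *ᵥ a)) • Q - t • vecMulVec (Q *ᵥ a) (Q *ᵥ a))) *ᵥ x)
      = t * (x ⬝ᵥ (Q *ᵥ a)) ^ 2 - (a ⬝ᵥ (Q *ᵥ a)) * (x ⬝ᵥ (Q *ᵥ x)) := by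
  rw [neg_mulVec, sub_mulVec, smul_mulVec, smul_mulVec, vmv_mulVec]
  rw [dotProduct_neg, dotProduct_sub, dotProduct_smul, dotProduct_smul, dotProduct_smul]
  rw [dotProduct_comm (Q *ᵥ a) x]
  simp only [smul_eq_mul]
  ring

end Aux

section Main
open Module Submodule

variable {n : ℕ}

private lemma ker_quad_rank {Q : Matrix (Fin n) (Fin n) ℝ} (a : Fin n → ℝ) :
    ∃ W : Submodule ℝ (Fin n → ℝ),
      (∀ b, b ∈ W ↔ b ⬝ᵥ (Q *ᵥ a) = 0) ∧ n ≤ finrank ℝ W + 1 := by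
  let f : (Fin n → ℝ) →ₗ[ℝ] ℝ :=
    { toFun := fun b => b ⬝ᵥ (Q *ᵥ a)
      map_add' := fun x y => add_dotProduct x y _
      map_smul' := fun c x => smul_dotProduct c x _ }
  refine ⟨LinearMap.ker f, fun b => LinearMap.mem_ker, ?_⟩
  have h1 := LinearMap.finrank_range_add_finrank_ker f
  have h2 : finrank ℝ (LinearMap.range f) ≤ 1 := by
    have := Submodule.finrank_le (LinearMap.range f)
    simpa using this
  have h3 : finrank ℝ (Fin n → ℝ) = n := Module.finrank_fin_fun ℝ
  omega

private lemma c_to_a {Q : Matrix (Fin n) (Fin n) ℝ} (hsymm : Q.IsHermitian)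
    {a : Fin n → ℝ} (ha : 0 < a ⬝ᵥ (Q *ᵥ a))
    (hc : ∀ b : Fin n → ℝ, b ⬝ᵥ (Q *ᵥ a) = 0 → b ⬝ᵥ (Q *ᵥ b) ≤ 0) :
    posEigCount Q = 1 := by
  rw [posEigCount_eq hsymm]
  set k := (Finset.univ.filter fun i => 0 < hsymm.eigenvalues i).card with hk
  have hk1 : 1 ≤ k := by
    by_contra hk0
    push_neg at hk0
    interval_cases k
    · have hall : ∀ i, hsymm.eigenvalues i ≤ 0 := by
        intro i
        by_contra hi
        push_neg at hi
        have hmem : i ∈ Finset.univ.filter fun i => 0 < hsymm.eigenvalues i := by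
          simp [hi]
        rw [Finset.card_eq_zero.mp hk.symm] at hmem
        simp at hmem
      have hrep : ∑ i, (hsymm.eigenvectorBasis.repr (WithLp.toLp 2 a)) i • evec hsymm i = a := by
        have := congrArg WithLp.ofLp (hsymm.eigenvectorBasis.sum_repr (WithLp.toLp 2 a))
        simp at this
        exact this
      have hq := quad_eigen_sum hsymm (fun i => (hsymm.eigenvectorBasis.repr (WithLp.toLp 2 a)) i)
      rw [hrep] at hq
      have hle : a ⬝ᵥ (Q *ᵥ a) ≤ 0 := by
        rw [hq]
        exact Finset.sum_nonpos fun i _ =>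
          mul_nonpos_of_nonpos_of_nonneg (hall i) (sq_nonneg _)
      linarith
  have hk2 : k ≤ 1 := by
    by_contra hk2
    push_neg at hk2
    obtain ⟨i, hi, j, hj, hij⟩ := Finset.one_lt_card.mp hk2
    rw [Finset.mem_filter] at hi hj
    have hμi := hi.2
    have hμj := hj.2
    have hli : ∀ s t : ℝ, s • evec hsymm i + t • evec hsymm j = 0 → s = 0 ∧ t = 0 := by
      intro s t hst
      have hq := pair_quad hsymm hij s t
      rw [hst] at hq
      simp only [zero_dotProduct] at hq
      exact pos_comb_zero hμi hμj hq
    have hP : ∀ x ∈ span ℝ ({evec hsymm i, evec hsymm j} : Set (Fin n → ℝ)),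
        x ≠ 0 → 0 < x ⬝ᵥ (Q *ᵥ x) := by
      intro x hx hx0
      obtain ⟨s, t, rfl⟩ := Submodule.mem_span_pair.mp hx
      rw [pair_quad hsymm hij s t]
      refine pos_comb_pos hμi hμj fun ⟨hs, ht⟩ => hx0 (by rw [hs, ht]; simp)
    obtain ⟨W, hWmem, hWrank⟩ := ker_quad_rank (Q := Q) a
    have hW : ∀ x ∈ W, x ⬝ᵥ (Q *ᵥ x) ≤ 0 := fun x hx => hc x ((hWmem x).mp hx)
    exact core hP hW (by rw [plane_rank _ _ hli]; omega)
  omega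

private lemma a_to_c {Q : Matrix (Fin n) (Fin n) ℝ} (hsymm : Q.IsHermitian)
    {a : Fin n → ℝ} (ha : 0 < a ⬝ᵥ (Q *ᵥ a)) (hA : posEigCount Q = 1) :
    ∀ b : Fin n → ℝ, b ⬝ᵥ (Q *ᵥ a) = 0 → b ⬝ᵥ (Q *ᵥ b) ≤ 0 := by
  intro b hba
  by_contra hb
  push_neg at hb
  rw [posEigCount_eq hsymm] at hA
  have hli : ∀ s t : ℝ, s • a + t • b = 0 → s = 0 ∧ t = 0 := by
    intro s t hst
    have hq := ab_quad hsymm hba s t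
    rw [hst] at hq
    simp only [zero_dotProduct] at hq
    exact pos_comb_zero ha hb hq
  have hP : ∀ x ∈ span ℝ ({a, b} : Set (Fin n → ℝ)), x ≠ 0 → 0 < x ⬝ᵥ (Q *ᵥ x) := by
    intro x hx hx0
    obtain ⟨s, t, rfl⟩ := Submodule.mem_span_pair.mp hx
    rw [ab_quad hsymm hba s t]
    refine pos_comb_pos ha hb fun ⟨hs, ht⟩ => hx0 (by rw [hs, ht]; simp)
  set S := (Finset.univ.filter fun i => 0 < hsymm.eigenvalues i)ᶜ with hS
  have hScard : S.card = n - 1 := by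
    rw [hS, Finset.card_compl, hA]
    simp
  have hn1 : 1 ≤ n := by
    have := (Finset.univ.filter fun i => 0 < hsymm.eigenvalues i).card_le_univ
    simp only [Finset.card_univ, Fintype.card_fin] at this
    omega
  have hW := eigen_span_npd hsymm S (fun i hi => by
    rw [hS, Finset.mem_compl, Finset.mem_filter] at hi
    push_neg at hi
    exact hi (Finset.mem_univ i))
  refine core hP hW ?_
  rw [plane_rank _ _ hli, eigen_span_rank hsymm S, hScard]
  omega

private lemma c_iff_b {Q : Matrix (Fin n) (Fin n) ℝ} (hsymm : Q.IsHermitian)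
    {a : Fin n → ℝ} (ha : 0 < a ⬝ᵥ (Q *ᵥ a)) :
    (∀ t : ℝ, 1 ≤ t →
        (-((a ⬝ᵥ (Q *ᵥ a)) • Q - t • vecMulVec (Q *ᵥ a) (Q *ᵥ a))).PosSemidef) ↔
      ∀ b : Fin n → ℝ, b ⬝ᵥ (Q *ᵥ a) = 0 → b ⬝ᵥ (Q *ᵥ b) ≤ 0 := by
  constructor
  · intro hb b hba
    have h1 := (hb 1 le_rfl).dotProduct_mulVec_nonneg b
    have hstar : star b = b := funext fun i => star_trivial (b i)
    rw [hstar, Mquad Q a 1 b, hba] at h1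
    nlinarith
  · intro hc t ht
    refine PosSemidef.of_dotProduct_mulVec_nonneg ?_ ?_
    · apply herm_of_transpose
      have hvt : (vecMulVec (Q *ᵥ a) (Q *ᵥ a))ᵀ = vecMulVec (Q *ᵥ a) (Q *ᵥ a) := by
        ext i j
        simp [vecMulVec_apply, mul_comm]
      rw [transpose_neg, transpose_sub, transpose_smul, transpose_smul,
        transpose_symm hsymm, hvt]
    · intro x
      have hstar : star x = x := funext fun i => star_trivial (x i)
      rw [hstar, Mquad Q a t x]
      set s := x ⬝ᵥ (Q *ᵥ a) with hs
      set α := a ⬝ᵥ (Q *ᵥ a) with hα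
      have key : α * (x ⬝ᵥ (Q *ᵥ x)) ≤ s ^ 2 := by
        set bb := α • x - s • a with hbb
        have hba : bb ⬝ᵥ (Q *ᵥ a) = 0 := by
          rw [hbb, sub_dotProduct, smul_dotProduct, smul_dotProduct, ← hs, ← hα]
          simp only [smul_eq_mul]
          ring
        have hq := hc bb hba
        have hax : a ⬝ᵥ (Q *ᵥ x) = s := by rw [symmdot hsymm]
        have hexp : bb ⬝ᵥ (Q *ᵥ bb) = α * (α * (x ⬝ᵥ (Q *ᵥ x)) - s ^ 2) := by
          rw [hbb, mulVec_sub, mulVec_smul, mulVec_smul]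
          rw [sub_dotProduct, dotProduct_sub, dotProduct_sub]
          simp only [smul_dotProduct, dotProduct_smul, smul_eq_mul, hax, ← hs, ← hα]
          ring
        rw [hexp] at hq
        nlinarith
      nlinarith [sq_nonneg s]

end Main

/-- Let `Q` be a real symmetric `n × n` matrix and `a ∈ ℝⁿ` with
`aᵀQa > 0`. Then the following are equivalent: (a) `Q` has exactly one positive eigenvalue;
(b) for every `t ≥ 1` the matrix `(aᵀQa)·Q − t·(Qa)(Qa)ᵀ` is negative semidefinite;
(c) `x ↦ xᵀQx` is negative semidefinite on the hyperplane `{b : bᵀQa = 0}`. -/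
theorem stmt8 {n : ℕ} (Q : Matrix (Fin n) (Fin n) ℝ) (hsymm : Q.IsHermitian)
    (a : Fin n → ℝ) (ha : 0 < a ⬝ᵥ (Q *ᵥ a)) :
    (posEigCount Q = 1 ↔
      ∀ t : ℝ, 1 ≤ t →
        (-((a ⬝ᵥ (Q *ᵥ a)) • Q - t • vecMulVec (Q *ᵥ a) (Q *ᵥ a))).PosSemidef) ∧
    ((∀ t : ℝ, 1 ≤ t →
        (-((a ⬝ᵥ (Q *ᵥ a)) • Q - t • vecMulVec (Q *ᵥ a) (Q *ᵥ a))).PosSemidef) ↔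
      ∀ b : Fin n → ℝ, b ⬝ᵥ (Q *ᵥ a) = 0 → b ⬝ᵥ (Q *ᵥ b) ≤ 0) := by
  constructor
  · constructor
    · intro hA
      exact (c_iff_b hsymm ha).mpr (a_to_c hsymm ha hA)
    · intro hB
      exact c_to_a hsymm ha ((c_iff_b hsymm ha).mp hB)
  · exact c_iff_b hsymm ha
end

section
/- Let f be a real homogeneous polynomial of degree d ≥ 3 in n variables and let a ∈ ℝ^n be a point with f(a) > 0. Then f is log-concave at a if and only if the directional derivative D_a f is log-concave at a. -/
open Matrix

open MvPolynomial

/-- Directional derivative `D_a f = Σᵢ aᵢ ∂f/∂xᵢ` of a polynomial. -/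
noncomputable def dirDeriv {n : ℕ} (a : Fin n → ℝ) (f : MvPolynomial (Fin n) ℝ) :
    MvPolynomial (Fin n) ℝ :=
  ∑ i, a i • pderiv i f

/-- The gradient of a polynomial at a point. -/
noncomputable def polyGrad {n : ℕ} (f : MvPolynomial (Fin n) ℝ) (x : Fin n → ℝ) :
    Fin n → ℝ :=
  fun i => eval x (pderiv i f)

/-- The Hessian matrix of a polynomial at a point. -/
noncomputable def polyHess {n : ℕ} (f : MvPolynomial (Fin n) ℝ) (x : Fin n → ℝ) :
    Matrix (Fin n) (Fin n) ℝ :=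
  Matrix.of fun i j => eval x (pderiv i (pderiv j f))

/-- The Hessian of `log f` at `x`, namely `(f(x)·H_f(x) − ∇f(x)∇f(x)ᵀ)/f(x)²`. -/
noncomputable def logHess {n : ℕ} (f : MvPolynomial (Fin n) ℝ) (x : Fin n → ℝ) :
    Matrix (Fin n) (Fin n) ℝ :=
  ((eval x f) ^ 2)⁻¹ • ((eval x f) • polyHess f x -
    Matrix.vecMulVec (polyGrad f x) (polyGrad f x))

/-- `f` is log-concave at `x`: either `f = 0`, or `f(x) > 0` and the Hessian of `log f`
at `x` is negative semidefinite. -/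
def LogConcaveAt {n : ℕ} (f : MvPolynomial (Fin n) ℝ) (x : Fin n → ℝ) : Prop :=
  f = 0 ∨ (0 < eval x f ∧ (-(logHess f x)).PosSemidef)

/-- `f` is strictly log-concave at `x`: `f(x) > 0` and the Hessian of `log f` at `x` is
negative definite. -/
def StrictLogConcaveAt {n : ℕ} (f : MvPolynomial (Fin n) ℝ) (x : Fin n → ℝ) : Prop :=
  0 < eval x f ∧ (-(logHess f x)).PosDef


namespace Stmt11Aux

open MvPolynomial

variable {n : ℕ}

lemma degree_eq_sum_univ (s : Fin n →₀ ℕ) : s.degree = ∑ i, s i :=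
  Finset.sum_subset (Finset.subset_univ _) fun i _ hi => Finsupp.notMem_support_iff.mp hi

lemma degree_sub_single (s : Fin n →₀ ℕ) (i : Fin n) (h : 1 ≤ s i) :
    (s - Finsupp.single i 1).degree = s.degree - 1 := by
  rw [degree_eq_sum_univ, degree_eq_sum_univ,
    Fintype.sum_eq_add_sum_compl i, Fintype.sum_eq_add_sum_compl i]
  have h1 : ((s - Finsupp.single i 1 : Fin n →₀ ℕ)) i = s i - 1 := by
    rw [Finsupp.tsub_apply, Finsupp.single_eq_same]
  have h2 : ∀ j ∈ ({i}ᶜ : Finset (Fin n)), ((s - Finsupp.single i 1 : Fin n →₀ ℕ)) j = s j := by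
    intro j hj
    have hij : i ≠ j := fun hh => by simp [hh] at hj
    rw [Finsupp.tsub_apply, Finsupp.single_eq_of_ne' hij, tsub_zero]
  rw [h1, Finset.sum_congr rfl h2]
  show s i - 1 + ∑ j ∈ {i}ᶜ, s j = s i + ∑ j ∈ {i}ᶜ, s j - 1
  omega

lemma pderiv_comm' (i j : Fin n) (f : MvPolynomial (Fin n) ℝ) :
    pderiv i (pderiv j f) = pderiv j (pderiv i f) := by
  induction f using MvPolynomial.induction_on' with
  | monomial s c =>
    rcases eq_or_ne i j with rfl | hij
    · rfl
    · simp only [pderiv_monomial]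
      rw [Finsupp.tsub_apply, Finsupp.tsub_apply,
        Finsupp.single_eq_of_ne' (Ne.symm hij), Finsupp.single_eq_of_ne' hij,
        tsub_zero, tsub_zero,
        show s - Finsupp.single j 1 - Finsupp.single i 1
            = s - Finsupp.single i 1 - Finsupp.single j 1 by
          rw [tsub_tsub, tsub_tsub, add_comm]]
      congr 1
      ring
  | add p q hp hq => simp only [map_add, hp, hq]

lemma pderiv_isHomogeneous {d : ℕ} {f : MvPolynomial (Fin n) ℝ}
    (hf : f.IsHomogeneous d) (i : Fin n) : (pderiv i f).IsHomogeneous (d - 1) := by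
  have hrw : pderiv i f = ∑ s ∈ f.support, pderiv i (monomial s (coeff s f)) := by
    rw [← map_sum, support_sum_monomial_coeff]
  rw [hrw]
  apply IsHomogeneous.sum
  intro s hs
  rw [pderiv_monomial]
  rcases Nat.eq_zero_or_pos (s i) with h0 | h1
  · rw [h0, Nat.cast_zero, mul_zero]
    simpa using isHomogeneous_zero (Fin n) ℝ (d - 1)
  · apply isHomogeneous_monomial
    rw [degree_sub_single s i h1]
    have hdeg : s.degree = d := by
      rw [Finsupp.degree_eq_weight_one]
      exact hf (mem_support_iff.mp hs)
    omega

lemma euler_monomial (a : Fin n → ℝ) (s : Fin n →₀ ℕ) (c : ℝ) :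
    ∑ i, a i * eval a (pderiv i (monomial s c)) = (s.degree : ℝ) * eval a (monomial s c) := by
  have key : ∀ i, a i * eval a (pderiv i (monomial s c))
      = (s i : ℝ) * eval a (monomial s c) := by
    intro i
    rw [pderiv_monomial, eval_monomial, eval_monomial, Finsupp.prod_pow, Finsupp.prod_pow]
    rcases Nat.eq_zero_or_pos (s i) with h0 | h1
    · simp [h0]
    · have hprod : ∀ j ∈ ({i}ᶜ : Finset (Fin n)),
          a j ^ ((s - Finsupp.single i 1 : Fin n →₀ ℕ)) j = a j ^ s j := by
        intro j hj
        have hij : i ≠ j := fun hh => by simp [hh] at hj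
        rw [Finsupp.tsub_apply, Finsupp.single_eq_of_ne' hij, tsub_zero]
      rw [Fintype.prod_eq_mul_prod_compl i, Fintype.prod_eq_mul_prod_compl i,
        Finset.prod_congr rfl hprod]
      have hii : ((s - Finsupp.single i 1 : Fin n →₀ ℕ)) i = s i - 1 := by
        rw [Finsupp.tsub_apply, Finsupp.single_eq_same]
      rw [hii]
      have hpow : a i * a i ^ (s i - 1) = a i ^ s i := by
        conv_rhs => rw [show s i = (s i - 1) + 1 by omega]
        rw [pow_succ]
        ring
      rw [← hpow]
      ring
  rw [Finset.sum_congr rfl fun i _ => key i, ← Finset.sum_mul]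
  congr 1
  rw [degree_eq_sum_univ]
  push_cast
  rfl

lemma eval_dirDeriv (a : Fin n → ℝ) (p : MvPolynomial (Fin n) ℝ) :
    eval a (dirDeriv a p) = ∑ i, a i * eval a (pderiv i p) := by
  simp [dirDeriv, smul_eval]

lemma euler {d : ℕ} {f : MvPolynomial (Fin n) ℝ} (hf : f.IsHomogeneous d) (a : Fin n → ℝ) :
    eval a (dirDeriv a f) = (d : ℝ) * eval a f := by
  rw [eval_dirDeriv]
  have hone : ∀ i, eval a (pderiv i f)
      = ∑ s ∈ f.support, eval a (pderiv i (monomial s (coeff s f))) := by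
    intro i
    conv_lhs => rw [f.as_sum]
    rw [map_sum, map_sum]
  calc ∑ i, a i * eval a (pderiv i f)
      = ∑ i, ∑ s ∈ f.support, a i * eval a (pderiv i (monomial s (coeff s f))) := by
        exact Finset.sum_congr rfl fun i _ => by rw [hone, Finset.mul_sum]
    _ = ∑ s ∈ f.support, ∑ i, a i * eval a (pderiv i (monomial s (coeff s f))) :=
        Finset.sum_comm
    _ = ∑ s ∈ f.support, (d : ℝ) * eval a (monomial s (coeff s f)) := by
        refine Finset.sum_congr rfl fun s hs => ?_
        rw [euler_monomial]
        have hdeg : s.degree = d := by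
          rw [Finsupp.degree_eq_weight_one]
          exact hf (mem_support_iff.mp hs)
        rw [hdeg]
    _ = (d : ℝ) * eval a f := by
        rw [← Finset.mul_sum, ← map_sum, support_sum_monomial_coeff]

lemma pderiv_dirDeriv (a : Fin n → ℝ) (j : Fin n) (f : MvPolynomial (Fin n) ℝ) :
    pderiv j (dirDeriv a f) = dirDeriv a (pderiv j f) := by
  unfold dirDeriv
  rw [map_sum]
  refine Finset.sum_congr rfl fun i _ => ?_
  rw [Derivation.map_smul, pderiv_comm' j i]

lemma quad_expand (c F : ℝ) (Q : Matrix (Fin n) (Fin n) ℝ) (G v : Fin n → ℝ) :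
    v ⬝ᵥ ((-(c • (F • Q - Matrix.vecMulVec G G))) *ᵥ v)
      = c * ((G ⬝ᵥ v) ^ 2 - F * (v ⬝ᵥ (Q *ᵥ v))) := by
  have h1 : Matrix.vecMulVec G G *ᵥ v = (G ⬝ᵥ v) • G := by
    funext i
    simp only [Matrix.mulVec, dotProduct, Matrix.vecMulVec_apply, Pi.smul_apply, smul_eq_mul,
      Finset.sum_mul]
    exact Finset.sum_congr rfl fun j _ => by ring
  rw [Matrix.neg_mulVec, dotProduct_neg, Matrix.smul_mulVec, dotProduct_smul,
    Matrix.sub_mulVec, dotProduct_sub, Matrix.smul_mulVec, dotProduct_smul, h1,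
    dotProduct_smul, smul_eq_mul, smul_eq_mul, smul_eq_mul, dotProduct_comm v G]
  ring

end Stmt11Aux

set_option maxHeartbeats 1600000 in
/-- Let `f` be a real homogeneous polynomial of degree `d ≥ 3` and `a` a
point with `f(a) > 0`. Then `f` is log-concave at `a` if and only if `D_a f` is log-concave
at `a`. -/
theorem stmt11 {n d : ℕ} (hd : 3 ≤ d) (f : MvPolynomial (Fin n) ℝ)
    (hf : f.IsHomogeneous d) (a : Fin n → ℝ) (ha : 0 < eval a f) :
    LogConcaveAt f a ↔ LogConcaveAt (dirDeriv a f) a := by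
  classical
  have hdR : (3 : ℝ) ≤ (d : ℝ) := by exact_mod_cast hd
  have hcast1 : ((d - 1 : ℕ) : ℝ) = (d : ℝ) - 1 := by
    rw [Nat.cast_sub (by omega), Nat.cast_one]
  have hcast2 : ((d - 1 - 1 : ℕ) : ℝ) = (d : ℝ) - 2 := by
    rw [show d - 1 - 1 = d - 2 by omega, Nat.cast_sub (by omega)]
    norm_num
  have hgval : eval a (dirDeriv a f) = (d : ℝ) * eval a f := Stmt11Aux.euler hf a
  have hga : 0 < eval a (dirDeriv a f) := by
    rw [hgval]; exact mul_pos (by linarith) ha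
  have hfne : f ≠ 0 := by intro h; rw [h] at ha; simp at ha
  have hgne : dirDeriv a f ≠ 0 := by intro h; rw [h] at hga; simp at hga
  -- gradient and Hessian of the directional derivative
  have hgrad : polyGrad (dirDeriv a f) a = ((d : ℝ) - 1) • polyGrad f a := by
    funext j
    show eval a (pderiv j (dirDeriv a f)) = _
    rw [Stmt11Aux.pderiv_dirDeriv a j f,
      Stmt11Aux.euler (Stmt11Aux.pderiv_isHomogeneous hf j) a, hcast1]
    simp [polyGrad]
  have hhess : polyHess (dirDeriv a f) a = ((d : ℝ) - 2) • polyHess f a := by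
    ext i j
    show eval a (pderiv i (pderiv j (dirDeriv a f))) = _
    rw [Stmt11Aux.pderiv_dirDeriv a j f, Stmt11Aux.pderiv_dirDeriv a i (pderiv j f),
      Stmt11Aux.euler (Stmt11Aux.pderiv_isHomogeneous (Stmt11Aux.pderiv_isHomogeneous hf j) i) a,
      hcast2]
    simp [polyHess]
  have hsymQ : ∀ i j, polyHess f a i j = polyHess f a j i := by
    intro i j
    show eval a (pderiv i (pderiv j f)) = eval a (pderiv j (pderiv i f))
    exact congrArg (eval a) (Stmt11Aux.pderiv_comm' i j f)
  have hQa : polyHess f a *ᵥ a = ((d : ℝ) - 1) • polyGrad f a := by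
    funext i
    simp only [Matrix.mulVec, dotProduct, Pi.smul_apply, smul_eq_mul]
    have hterm : ∀ j, polyHess f a i j * a j = a j * eval a (pderiv j (pderiv i f)) := by
      intro j
      show eval a (pderiv i (pderiv j f)) * a j = _
      rw [Stmt11Aux.pderiv_comm' i j f]; ring
    rw [Finset.sum_congr rfl fun j _ => hterm j, ← Stmt11Aux.eval_dirDeriv,
      Stmt11Aux.euler (Stmt11Aux.pderiv_isHomogeneous hf i) a, hcast1]
    rfl
  have hGa : polyGrad f a ⬝ᵥ a = (d : ℝ) * eval a f := by
    have hrw : polyGrad f a ⬝ᵥ a = eval a (dirDeriv a f) := by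
      rw [Stmt11Aux.eval_dirDeriv]
      simp only [dotProduct, polyGrad]
      exact Finset.sum_congr rfl fun i _ => mul_comm _ _
    rw [hrw, hgval]
  have hsymdot : ∀ u v : Fin n → ℝ,
      u ⬝ᵥ (polyHess f a *ᵥ v) = (polyHess f a *ᵥ u) ⬝ᵥ v := by
    intro u v
    simp only [dotProduct, Matrix.mulVec, dotProduct, Finset.mul_sum, Finset.sum_mul]
    rw [Finset.sum_comm]
    refine Finset.sum_congr rfl fun i _ => Finset.sum_congr rfl fun j _ => ?_
    rw [hsymQ j i]
    ring
  -- Hermitian-ness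
  have hherm : ∀ p : MvPolynomial (Fin n) ℝ, (-(logHess p a)).IsHermitian := by
    intro p
    have hsym : ∀ i j, polyHess p a i j = polyHess p a j i := by
      intro i j
      show eval a (pderiv i (pderiv j p)) = eval a (pderiv j (pderiv i p))
      exact congrArg (eval a) (Stmt11Aux.pderiv_comm' i j p)
    show _ᴴ = _
    ext i j
    simp only [Matrix.conjTranspose_apply, Matrix.neg_apply, logHess, Matrix.smul_apply,
      Matrix.sub_apply, Matrix.vecMulVec_apply, smul_eq_mul, star_trivial]
    rw [hsym j i]
    ring
  -- quadratic forms
  have hquadf : ∀ v : Fin n → ℝ, v ⬝ᵥ ((-(logHess f a)) *ᵥ v)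
      = ((eval a f) ^ 2)⁻¹ * ((polyGrad f a ⬝ᵥ v) ^ 2
          - eval a f * (v ⬝ᵥ (polyHess f a *ᵥ v))) := by
    intro v
    simp only [logHess]
    exact Stmt11Aux.quad_expand _ _ _ _ v
  have hquadg : ∀ v : Fin n → ℝ, v ⬝ᵥ ((-(logHess (dirDeriv a f) a)) *ᵥ v)
      = (((d : ℝ) * eval a f) ^ 2)⁻¹ * (((d : ℝ) - 1) ^ 2 * (polyGrad f a ⬝ᵥ v) ^ 2
          - (d : ℝ) * ((d : ℝ) - 2) * eval a f * (v ⬝ᵥ (polyHess f a *ᵥ v))) := by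
    intro v
    simp only [logHess]
    rw [Stmt11Aux.quad_expand, hgval, hgrad, hhess, Matrix.smul_mulVec,
      dotProduct_smul, smul_dotProduct, smul_eq_mul, smul_eq_mul]
    ring
  have hEf : (0 : ℝ) < ((eval a f) ^ 2)⁻¹ := by positivity
  have hdF : (0 : ℝ) < (d : ℝ) * eval a f := mul_pos (by linarith) ha
  have hEg : (0 : ℝ) < (((d : ℝ) * eval a f) ^ 2)⁻¹ := by positivity
  -- characterization of the two PSD conditions
  have hcondf : (-(logHess f a)).PosSemidef ↔
      ∀ v, eval a f * (v ⬝ᵥ (polyHess f a *ᵥ v)) ≤ (polyGrad f a ⬝ᵥ v) ^ 2 := by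
    constructor
    · intro h v
      have h2 := h.dotProduct_mulVec_nonneg v
      rw [star_trivial, hquadf v] at h2
      nlinarith
    · intro h
      refine Matrix.PosSemidef.of_dotProduct_mulVec_nonneg (hherm f) fun v => ?_
      rw [star_trivial, hquadf v]
      have := h v
      nlinarith
  have hcondg : (-(logHess (dirDeriv a f) a)).PosSemidef ↔
      ∀ v, (d : ℝ) * ((d : ℝ) - 2) * eval a f * (v ⬝ᵥ (polyHess f a *ᵥ v))
        ≤ ((d : ℝ) - 1) ^ 2 * (polyGrad f a ⬝ᵥ v) ^ 2 := by
    constructor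
    · intro h v
      have h2 := h.dotProduct_mulVec_nonneg v
      rw [star_trivial, hquadg v] at h2
      nlinarith
    · intro h
      refine Matrix.PosSemidef.of_dotProduct_mulVec_nonneg (hherm _) fun v => ?_
      rw [star_trivial, hquadg v]
      have := h v
      nlinarith
  -- the common reduction: nonpositivity on the hyperplane ∇f(a)·w = 0
  have hdecomp : ∀ v : Fin n → ℝ,
      (∀ w, polyGrad f a ⬝ᵥ w = 0 → w ⬝ᵥ (polyHess f a *ᵥ w) ≤ 0) →
      ∃ t Pw : ℝ, Pw ≤ 0 ∧
        v ⬝ᵥ (polyHess f a *ᵥ v) = Pw + t ^ 2 * ((d : ℝ) * ((d : ℝ) - 1) * eval a f) ∧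
        polyGrad f a ⬝ᵥ v = t * ((d : ℝ) * eval a f) := by
    intro v hZ
    set t : ℝ := (polyGrad f a ⬝ᵥ v) / ((d : ℝ) * eval a f) with ht
    set w : Fin n → ℝ := v - t • a with hw
    have hγw : polyGrad f a ⬝ᵥ w = 0 := by
      rw [hw, dotProduct_sub, dotProduct_smul, hGa, smul_eq_mul, ht]
      field_simp
      ring
    have hPw := hZ w hγw
    have hv : v = w + t • a := by rw [hw]; abel
    have h1 : w ⬝ᵥ (polyHess f a *ᵥ a) = 0 := by
      rw [hQa, dotProduct_smul, smul_eq_mul, dotProduct_comm, hγw, mul_zero]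
    have h2 : a ⬝ᵥ (polyHess f a *ᵥ w) = 0 := by
      rw [hsymdot a w, hQa, smul_dotProduct, smul_eq_mul, hγw, mul_zero]
    have h3 : a ⬝ᵥ (polyHess f a *ᵥ a) = (d : ℝ) * ((d : ℝ) - 1) * eval a f := by
      rw [hQa, dotProduct_smul, smul_eq_mul, dotProduct_comm, hGa]; ring
    refine ⟨t, w ⬝ᵥ (polyHess f a *ᵥ w), hPw, ?_, ?_⟩
    · have expand : v ⬝ᵥ (polyHess f a *ᵥ v)
          = w ⬝ᵥ (polyHess f a *ᵥ w) + t * (w ⬝ᵥ (polyHess f a *ᵥ a))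
            + t * (a ⬝ᵥ (polyHess f a *ᵥ w)) + t * t * (a ⬝ᵥ (polyHess f a *ᵥ a)) := by
        conv_lhs => rw [hv]
        rw [Matrix.mulVec_add, Matrix.mulVec_smul, dotProduct_add, add_dotProduct,
          add_dotProduct, dotProduct_smul, dotProduct_smul, smul_dotProduct,
          smul_dotProduct, smul_eq_mul, smul_eq_mul, smul_eq_mul, smul_eq_mul]
        ring
      rw [expand, h1, h2, h3]
      ring
    · rw [ht, div_mul_cancel₀ _ hdF.ne']
  have hZf : (∀ v, eval a f * (v ⬝ᵥ (polyHess f a *ᵥ v)) ≤ (polyGrad f a ⬝ᵥ v) ^ 2) →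
      ∀ w, polyGrad f a ⬝ᵥ w = 0 → w ⬝ᵥ (polyHess f a *ᵥ w) ≤ 0 := by
    intro h w hw
    have := h w
    rw [hw] at this
    nlinarith
  have hZg : (∀ v, (d : ℝ) * ((d : ℝ) - 2) * eval a f * (v ⬝ᵥ (polyHess f a *ᵥ v))
        ≤ ((d : ℝ) - 1) ^ 2 * (polyGrad f a ⬝ᵥ v) ^ 2) →
      ∀ w, polyGrad f a ⬝ᵥ w = 0 → w ⬝ᵥ (polyHess f a *ᵥ w) ≤ 0 := by
    intro h w hw
    have := h w
    rw [hw] at this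
    nlinarith [mul_pos (mul_pos (show (0 : ℝ) < (d : ℝ) by linarith)
      (show (0 : ℝ) < (d : ℝ) - 2 by linarith)) ha]
  have keyF : (∀ w, polyGrad f a ⬝ᵥ w = 0 → w ⬝ᵥ (polyHess f a *ᵥ w) ≤ 0) →
      ∀ v, eval a f * (v ⬝ᵥ (polyHess f a *ᵥ v)) ≤ (polyGrad f a ⬝ᵥ v) ^ 2 := by
    intro hZ v
    obtain ⟨t, Pw, hPw, hPv, hγv⟩ := hdecomp v hZ
    rw [hPv, hγv]
    nlinarith [mul_nonneg (mul_nonneg (sq_nonneg t) (sq_nonneg (eval a f)))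
      (show (0 : ℝ) ≤ (d : ℝ) by linarith),
      mul_nonpos_of_nonneg_of_nonpos ha.le hPw]
  have keyG : (∀ w, polyGrad f a ⬝ᵥ w = 0 → w ⬝ᵥ (polyHess f a *ᵥ w) ≤ 0) →
      ∀ v, (d : ℝ) * ((d : ℝ) - 2) * eval a f * (v ⬝ᵥ (polyHess f a *ᵥ v))
        ≤ ((d : ℝ) - 1) ^ 2 * (polyGrad f a ⬝ᵥ v) ^ 2 := by
    intro hZ v
    obtain ⟨t, Pw, hPw, hPv, hγv⟩ := hdecomp v hZ
    rw [hPv, hγv]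
    nlinarith [mul_nonneg (mul_nonneg (mul_nonneg (sq_nonneg t) (sq_nonneg (eval a f)))
      (show (0 : ℝ) ≤ (d : ℝ) * (d : ℝ) by nlinarith)) (show (0 : ℝ) ≤ (d : ℝ) - 1 by linarith),
      mul_nonpos_of_nonneg_of_nonpos
        (show (0 : ℝ) ≤ (d : ℝ) * ((d : ℝ) - 2) * eval a f by nlinarith) hPw]
  constructor
  · rintro (h0 | ⟨-, hpsd⟩)
    · exact absurd h0 hfne
    · exact Or.inr ⟨hga, hcondg.mpr (keyG (hZf (hcondf.mp hpsd)))⟩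
  · rintro (h0 | ⟨-, hpsd⟩)
    · exact absurd h0 hgne
    · exact Or.inr ⟨ha, hcondf.mpr (keyF (hZg (hcondg.mp hpsd)))⟩
end

section
/- Let f be a real homogeneous polynomial of degree d ≥ 2 in n variables, K ⊆ ℝ^n a proper convex cone, a a point in the interior of K, and v a vector spanning an extreme ray of K. If D_a f and D_v f are both K-completely log-concave, then D_{a+v} f is K-completely log-concave. -/
open Matrix

open MvPolynomial

/-- The symmetric matrix `Q` of a quadratic form `q`, so that `q(x) = xᵀQx` when `q` is a
homogeneous quadratic: `Q = (1/2)·H_q`. -/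
noncomputable def polyQuadMatrix {n : ℕ} (q : MvPolynomial (Fin n) ℝ) :
    Matrix (Fin n) (Fin n) ℝ :=
  Matrix.of fun i j => (1 / 2) * eval 0 (pderiv i (pderiv j q))

/-- A form `f` of degree `d` is `K`-Lorentzian if for `d ≤ 1` it is nonnegative on `K`, and
for `d ≥ 2`, for all `a₁, …, a_{d-2}` in the interior of `K` the quadratic form
`D_{a₁} ⋯ D_{a_{d-2}} f` has a matrix with exactly one positive eigenvalue which is positive
as a bilinear form on the interior of `K`. -/
def IsKLorentzian {n : ℕ} (K : Set (Fin n → ℝ)) (d : ℕ) (f : MvPolynomial (Fin n) ℝ) :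
    Prop :=
  if d ≤ 1 then ∀ x ∈ K, 0 ≤ eval x f
  else ∀ L : List (Fin n → ℝ), L.length = d - 2 → (∀ v ∈ L, v ∈ interior K) →
    IsLorentzianMatrix K (polyQuadMatrix (L.foldr dirDeriv f))

/-- `f` lies in `iSL^d(K)`: `f` is `K`-Lorentzian and for all nonzero `a₁, …, a_{d-2} ∈ K`
the matrix `Q` of `D_{a₁} ⋯ D_{a_{d-2}} f` is nonsingular and satisfies `xᵀQy > 0` for all
nonzero `x, y ∈ K`. -/
def MemISL {n : ℕ} (K : Set (Fin n → ℝ)) (d : ℕ) (f : MvPolynomial (Fin n) ℝ) : Prop :=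
  IsKLorentzian K d f ∧
    ∀ L : List (Fin n → ℝ), L.length = d - 2 → (∀ v ∈ L, v ∈ K ∧ v ≠ 0) →
      (polyQuadMatrix (L.foldr dirDeriv f)).det ≠ 0 ∧
      ∀ x ∈ K, x ≠ 0 → ∀ y ∈ K, y ≠ 0 →
        0 < x ⬝ᵥ (polyQuadMatrix (L.foldr dirDeriv f) *ᵥ y)

/-- `f` of degree `d` is `K`-completely log-concave: for every `m ≤ d` and every
`a₁, …, a_m ∈ K`, the derivative `D_{a₁} ⋯ D_{a_m} f` is log-concave on the interior of `K`. -/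
def IsKCLC {n : ℕ} (K : Set (Fin n → ℝ)) (d : ℕ) (f : MvPolynomial (Fin n) ℝ) : Prop :=
  ∀ L : List (Fin n → ℝ), L.length ≤ d → (∀ v ∈ L, v ∈ K) →
    ∀ x ∈ interior K, LogConcaveAt (L.foldr dirDeriv f) x

/-- A matrix `A` is `K`-positive if `Ax` lies in the interior of `K` for every nonzero
`x ∈ K`. -/
def IsKPositive {n : ℕ} (K : Set (Fin n → ℝ)) (A : Matrix (Fin n) (Fin n) ℝ) : Prop :=
  ∀ x ∈ K, x ≠ 0 → A *ᵥ x ∈ interior K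

namespace Stmt18Aux

open scoped Pointwise

open MvPolynomial

variable {n : ℕ}

lemma pderiv_pderiv_comm (i j : Fin n) (p : MvPolynomial (Fin n) ℝ) :
    pderiv i (pderiv j p) = pderiv j (pderiv i p) := by
  induction p using MvPolynomial.induction_on' with
  | add p q hp hq => simp [map_add, hp, hq]
  | monomial s a =>
    rcases eq_or_ne i j with rfl | hij
    · rfl
    · classical
      simp only [pderiv_monomial]
      have h1 : (s - Finsupp.single j (1:ℕ)) i = s i := by
        rw [Finsupp.tsub_apply, Finsupp.single_eq_of_ne hij, Nat.sub_zero]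
      have h2 : (s - Finsupp.single i (1:ℕ)) j = s j := by
        rw [Finsupp.tsub_apply, Finsupp.single_eq_of_ne hij.symm, Nat.sub_zero]
      have h3 : s - Finsupp.single j (1:ℕ) - Finsupp.single i (1:ℕ)
          = s - Finsupp.single i (1:ℕ) - Finsupp.single j (1:ℕ) := by
        ext k
        simp only [Finsupp.tsub_apply, Finsupp.single_apply]
        split_ifs <;> omega
      rw [h1, h2, h3, mul_right_comm]

lemma X_mul_pderiv_monomial (i : Fin n) (d : Fin n →₀ ℕ) (a : ℝ) :
    (X i : MvPolynomial (Fin n) ℝ) * pderiv i (monomial d a) = monomial d (a * (d i : ℝ)) := by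
  classical
  rw [pderiv_monomial]
  rcases Nat.eq_zero_or_pos (d i) with h | h
  · rw [h]; simp
  · have hidx : Finsupp.single i (1:ℕ) + (d - Finsupp.single i (1:ℕ)) = d := by
      ext k
      simp only [Finsupp.add_apply, Finsupp.tsub_apply, Finsupp.single_apply]
      split_ifs with hk
      · subst hk; omega
      · omega
    rw [X, monomial_mul, hidx, one_mul]

lemma degree_eq_sum_univ (d : Fin n →₀ ℕ) : d.degree = ∑ i : Fin n, d i := by
  rw [Finsupp.degree]
  exact Finset.sum_subset (Finset.subset_univ _)
    (fun i _ hi => Finsupp.notMem_support_iff.mp hi)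

lemma euler {p : MvPolynomial (Fin n) ℝ} {m : ℕ} (hp : p.IsHomogeneous m) :
    ∑ i : Fin n, (X i : MvPolynomial (Fin n) ℝ) * pderiv i p = m • p := by
  calc ∑ i : Fin n, (X i : MvPolynomial (Fin n) ℝ) * pderiv i p
      = ∑ i : Fin n, ∑ d ∈ p.support, X i * pderiv i (monomial d (coeff d p)) := by
        refine Finset.sum_congr rfl fun i _ => ?_
        conv_lhs => rw [p.as_sum]
        rw [map_sum, Finset.mul_sum]
    _ = ∑ d ∈ p.support, ∑ i : Fin n, X i * pderiv i (monomial d (coeff d p)) :=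
        Finset.sum_comm
    _ = ∑ d ∈ p.support, m • monomial d (coeff d p) := by
        refine Finset.sum_congr rfl fun d hd => ?_
        have hdeg : d.degree = m := by
          have := hp (Finsupp.mem_support_iff.mp hd)
          rw [Finsupp.degree_eq_weight_one]
          exact this
        calc ∑ i : Fin n, (X i : MvPolynomial (Fin n) ℝ) * pderiv i (monomial d (coeff d p))
            = ∑ i : Fin n, monomial d (coeff d p * (d i : ℝ)) := by
              refine Finset.sum_congr rfl fun i _ => X_mul_pderiv_monomial i d _
          _ = monomial d (coeff d p * (m : ℝ)) := by
              rw [← map_sum, ← Finset.mul_sum]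
              norm_cast
              rw [← degree_eq_sum_univ, hdeg]
          _ = m • monomial d (coeff d p) := by
              rw [smul_monomial, nsmul_eq_mul, mul_comm]
    _ = m • p := by rw [← Finset.smul_sum, ← p.as_sum]

lemma IsHomogeneous.pderiv'' {p : MvPolynomial (Fin n) ℝ} {m : ℕ}
    (hp : p.IsHomogeneous (m + 1)) (i : Fin n) : (pderiv i p).IsHomogeneous m := by
  classical
  conv_lhs => rw [p.as_sum]
  rw [map_sum]
  refine IsHomogeneous.sum _ _ _ fun d hd => ?_
  rw [pderiv_monomial]
  rcases Nat.eq_zero_or_pos (d i) with h | h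
  · simp only [h, Nat.cast_zero, mul_zero, map_zero]
    exact isHomogeneous_zero _ _ _
  · apply isHomogeneous_monomial
    have hdeg : d.degree = m + 1 := by
      have := hp (Finsupp.mem_support_iff.mp hd)
      rw [Finsupp.degree_eq_weight_one]; exact this
    have key : (d - Finsupp.single i (1:ℕ)).degree + 1 = d.degree := by
      rw [degree_eq_sum_univ, degree_eq_sum_univ]
      have : ∀ k : Fin n, (d - Finsupp.single i (1:ℕ)) k + Finsupp.single i (1:ℕ) k = d k := by
        intro k
        simp only [Finsupp.tsub_apply, Finsupp.single_apply]
        split_ifs with hk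
        · subst hk; omega
        · omega
      calc (∑ k : Fin n, (d - Finsupp.single i (1:ℕ)) k) + 1
          = ∑ k : Fin n, ((d - Finsupp.single i (1:ℕ)) k + Finsupp.single i (1:ℕ) k) := by
            rw [Finset.sum_add_distrib]
            congr 1
            simp [Finsupp.single_apply]
        _ = ∑ k : Fin n, d k := Finset.sum_congr rfl fun k _ => this k
    omega

lemma eq_C_of_hom0 {p : MvPolynomial (Fin n) ℝ} (hp : p.IsHomogeneous 0) :
    p = C (coeff 0 p) := by
  ext d
  rcases eq_or_ne d 0 with rfl | hd
  · simp
  · rw [coeff_C, if_neg (by exact fun h => hd h.symm)]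
    by_contra hc
    have h0 : d.degree = 0 := by
      have := hp hc
      rw [Finsupp.degree_eq_weight_one]; exact this
    exact hd ((Finsupp.degree_eq_zero_iff d).mp h0)

lemma eval_dirDeriv (y b : Fin n → ℝ) (p : MvPolynomial (Fin n) ℝ) :
    eval y (dirDeriv b p) = ∑ i, b i * eval y (pderiv i p) := by
  simp [dirDeriv, smul_eq_C_mul, map_sum]

lemma euler_eval {p : MvPolynomial (Fin n) ℝ} {m : ℕ} (hp : p.IsHomogeneous m)
    (y : Fin n → ℝ) : eval y (dirDeriv y p) = (m : ℝ) * eval y p := by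
  have h := congrArg (eval y) (euler hp)
  rw [← Nat.cast_smul_eq_nsmul ℝ, smul_eq_C_mul, map_sum] at h
  simp only [eval_mul, eval_X, eval_C] at h
  rw [eval_dirDeriv]
  exact h

lemma dirDeriv_addP (b : Fin n → ℝ) (p q : MvPolynomial (Fin n) ℝ) :
    dirDeriv b (p + q) = dirDeriv b p + dirDeriv b q := by
  simp [dirDeriv, map_add, smul_add, Finset.sum_add_distrib]

lemma dirDeriv_zeroP (b : Fin n → ℝ) : dirDeriv b (0 : MvPolynomial (Fin n) ℝ) = 0 := by
  simp [dirDeriv]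

lemma dirDeriv_addD (b c : Fin n → ℝ) (p : MvPolynomial (Fin n) ℝ) :
    dirDeriv (b + c) p = dirDeriv b p + dirDeriv c p := by
  simp [dirDeriv, add_smul, Finset.sum_add_distrib]

lemma dirDeriv_smulD (t : ℝ) (b : Fin n → ℝ) (p : MvPolynomial (Fin n) ℝ) :
    dirDeriv (t • b) p = t • dirDeriv b p := by
  simp [dirDeriv, mul_smul, Finset.smul_sum]

lemma pderiv_dirDeriv (i : Fin n) (b : Fin n → ℝ) (p : MvPolynomial (Fin n) ℝ) :
    pderiv i (dirDeriv b p) = dirDeriv b (pderiv i p) := by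
  simp only [dirDeriv, map_sum, Derivation.map_smul]
  exact Finset.sum_congr rfl fun j _ => by rw [pderiv_pderiv_comm]

lemma dirDeriv_comm (b c : Fin n → ℝ) (p : MvPolynomial (Fin n) ℝ) :
    dirDeriv b (dirDeriv c p) = dirDeriv c (dirDeriv b p) := by
  simp only [dirDeriv, map_sum, Derivation.map_smul, Finset.smul_sum]
  rw [Finset.sum_comm]
  refine Finset.sum_congr rfl fun i _ => Finset.sum_congr rfl fun j _ => ?_
  rw [smul_comm, pderiv_pderiv_comm]

lemma foldr_add (L : List (Fin n → ℝ)) (p q : MvPolynomial (Fin n) ℝ) :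
    L.foldr dirDeriv (p + q) = L.foldr dirDeriv p + L.foldr dirDeriv q := by
  induction L with
  | nil => rfl
  | cons b L ih => simp [List.foldr_cons, ih, dirDeriv_addP]

lemma foldr_zero (L : List (Fin n → ℝ)) :
    L.foldr dirDeriv (0 : MvPolynomial (Fin n) ℝ) = 0 := by
  induction L with
  | nil => rfl
  | cons b L ih => simp [List.foldr_cons, ih, dirDeriv_zeroP]

lemma foldr_dirDeriv_comm (L : List (Fin n → ℝ)) (b : Fin n → ℝ)
    (p : MvPolynomial (Fin n) ℝ) :
    L.foldr dirDeriv (dirDeriv b p) = dirDeriv b (L.foldr dirDeriv p) := by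
  induction L with
  | nil => rfl
  | cons c L ih => simp [List.foldr_cons, ih, dirDeriv_comm]

lemma dirDerivH {p : MvPolynomial (Fin n) ℝ} {m : ℕ}
    (hp : p.IsHomogeneous (m + 1)) (b : Fin n → ℝ) :
    (dirDeriv b p).IsHomogeneous m := by
  apply IsHomogeneous.sum
  intro i _
  rw [smul_eq_C_mul]
  simpa using (IsHomogeneous.pderiv'' hp i).C_mul (b i)

lemma foldr_hom (L : List (Fin n → ℝ)) {p : MvPolynomial (Fin n) ℝ} {m : ℕ}
    (hp : p.IsHomogeneous (m + L.length)) :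
    (L.foldr dirDeriv p).IsHomogeneous m := by
  induction L generalizing m with
  | nil => simpa using hp
  | cons b L ih =>
    have h1 : (L.foldr dirDeriv p).IsHomogeneous (m + 1) :=
      ih (by rw [show m + 1 + L.length = m + (b :: L).length by simp; omega]; exact hp)
    exact dirDerivH h1 b

lemma eval_foldr_replicate (x : Fin n → ℝ) :
    ∀ (s j : ℕ) (p : MvPolynomial (Fin n) ℝ), p.IsHomogeneous (s + j) →
      eval x ((List.replicate s x).foldr dirDeriv p)
        = ((s + j).descFactorial s : ℝ) * eval x p := by
  intro s
  induction s with
  | zero => intro j p _; simp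
  | succ s ih =>
    intro j p hp
    rw [List.replicate_succ', List.foldr_append]
    have hdx : (dirDeriv x p).IsHomogeneous (s + j) :=
      dirDerivH (by rw [show s + j + 1 = s + 1 + j by omega]; exact hp) x
    rw [show ([x] : List (Fin n → ℝ)).foldr dirDeriv p = dirDeriv x p from rfl]
    rw [ih j _ hdx, euler_eval hp]
    have hcast : ((s + 1 + j).descFactorial (s + 1) : ℝ)
        = ((s + 1 + j : ℕ) : ℝ) * ((s + j).descFactorial s : ℝ) := by
      rw [show s + 1 + j = (s + j) + 1 by omega, Nat.succ_descFactorial_succ]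
      push_cast
      ring
    rw [hcast]
    push_cast
    ring

lemma foldr_replicate_eq_C (x : Fin n → ℝ) {s : ℕ} {p : MvPolynomial (Fin n) ℝ}
    (hp : p.IsHomogeneous s) :
    (List.replicate s x).foldr dirDeriv p
      = C ((s.descFactorial s : ℝ) * eval x p) := by
  have h0 : ((List.replicate s x).foldr dirDeriv p).IsHomogeneous 0 :=
    foldr_hom _ (by simpa using hp)
  have hq := eq_C_of_hom0 h0
  have heval : eval x ((List.replicate s x).foldr dirDeriv p)
      = ((s.descFactorial s : ℝ)) * eval x p := by
    simpa using eval_foldr_replicate x s 0 p (by simpa using hp)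
  have hc : coeff 0 ((List.replicate s x).foldr dirDeriv p)
      = eval x ((List.replicate s x).foldr dirDeriv p) := by
    conv_rhs => rw [hq]
    rw [eval_C]
  rw [hq, hc, heval]

lemma grad_dot (p : MvPolynomial (Fin n) ℝ) (x u : Fin n → ℝ) :
    polyGrad p x ⬝ᵥ u = eval x (dirDeriv u p) := by
  rw [eval_dirDeriv]
  simp [polyGrad, dotProduct, mul_comm]

lemma hess_quad (p : MvPolynomial (Fin n) ℝ) (x u w : Fin n → ℝ) :
    u ⬝ᵥ (polyHess p x *ᵥ w) = eval x (dirDeriv u (dirDeriv w p)) := by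
  rw [eval_dirDeriv]
  simp only [pderiv_dirDeriv, eval_dirDeriv, dotProduct, Matrix.mulVec, polyHess,
    Matrix.of_apply]
  refine Finset.sum_congr rfl fun i _ => ?_
  congr 1
  refine Finset.sum_congr rfl fun j _ => ?_
  rw [pderiv_pderiv_comm, mul_comm]

lemma vecMulVec_quad (g u : Fin n → ℝ) :
    u ⬝ᵥ (Matrix.vecMulVec g g *ᵥ u) = (g ⬝ᵥ u) * (g ⬝ᵥ u) := by
  simp only [dotProduct, Matrix.mulVec, Matrix.vecMulVec_apply, Finset.mul_sum,
    Finset.sum_mul]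
  refine Finset.sum_congr rfl fun i _ => Finset.sum_congr rfl fun j _ => ?_
  ring

lemma quad_neg_logHess (p : MvPolynomial (Fin n) ℝ) (x u : Fin n → ℝ) :
    u ⬝ᵥ ((-(logHess p x)) *ᵥ u)
      = ((eval x p)^2)⁻¹ *
        ((eval x (dirDeriv u p))^2 - eval x p * eval x (dirDeriv u (dirDeriv u p))) := by
  have h1 := hess_quad p x u u
  have h2 := grad_dot p x u
  rw [logHess]
  rw [Matrix.neg_mulVec, dotProduct_neg, Matrix.smul_mulVec, dotProduct_smul,
    Matrix.sub_mulVec, dotProduct_sub, Matrix.smul_mulVec, dotProduct_smul,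
    vecMulVec_quad, h1, h2]
  simp only [smul_eq_mul]
  ring

lemma neg_logHess_hermitian (p : MvPolynomial (Fin n) ℝ) (x : Fin n → ℝ) :
    (-(logHess p x)).IsHermitian := by
  have : (logHess p x).IsHermitian := by
    unfold Matrix.IsHermitian
    ext i j
    simp only [Matrix.conjTranspose_apply, star_trivial]
    simp only [logHess, polyHess, polyGrad, Matrix.smul_apply, Matrix.sub_apply,
      Matrix.vecMulVec_apply, Matrix.of_apply, smul_eq_mul]
    rw [pderiv_pderiv_comm]
    ring
  exact this.neg

lemma logConcaveAt_of {p : MvPolynomial (Fin n) ℝ} {x : Fin n → ℝ} (he : 0 < eval x p)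
    (hineq : ∀ u, eval x p * eval x (dirDeriv u (dirDeriv u p))
      ≤ (eval x (dirDeriv u p))^2) :
    LogConcaveAt p x := by
  refine Or.inr ⟨he, Matrix.PosSemidef.of_dotProduct_mulVec_nonneg (neg_logHess_hermitian p x) fun u => ?_⟩
  rw [star_trivial, quad_neg_logHess]
  have h1 := hineq u
  have h2 : (0:ℝ) ≤ ((eval x p)^2)⁻¹ := by positivity
  nlinarith

lemma logConcave_ineq {p : MvPolynomial (Fin n) ℝ} {x : Fin n → ℝ}
    (hlc : LogConcaveAt p x) (hp0 : p ≠ 0) :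
    0 < eval x p ∧ ∀ u, eval x p * eval x (dirDeriv u (dirDeriv u p))
      ≤ (eval x (dirDeriv u p))^2 := by
  rcases hlc with h | ⟨he, hpsd⟩
  · exact absurd h hp0
  refine ⟨he, fun u => ?_⟩
  have h1 := hpsd.dotProduct_mulVec_nonneg u
  rw [star_trivial, quad_neg_logHess] at h1
  have h2 : (0:ℝ) < ((eval x p)^2)⁻¹ := by positivity
  nlinarith

lemma dirDeriv_of_hom0 {p : MvPolynomial (Fin n) ℝ} (hp : p.IsHomogeneous 0)
    (u : Fin n → ℝ) : dirDeriv u p = 0 := by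
  rw [eq_C_of_hom0 hp]
  simp [dirDeriv, pderiv_C]

lemma smul_mem_interior {K : Set (Fin n → ℝ)} (hK : IsProperCone K) {t : ℝ} (ht : 0 < t)
    {a : Fin n → ℝ} (ha : a ∈ interior K) : t • a ∈ interior K := by
  obtain ⟨-, hcone, -, -, -⟩ := hK
  have hsub : t • interior K ⊆ K := by
    rintro _ ⟨s, hs, rfl⟩
    exact hcone t ht.le _ (interior_subset hs)
  have hopen : IsOpen (t • interior K) := isOpen_interior.smul₀ (ne_of_gt ht)
  exact interior_maximal hsub hopen (Set.smul_mem_smul_set ha)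

lemma add_mem_interior {K : Set (Fin n → ℝ)} (hK : IsProperCone K) {v : Fin n → ℝ}
    (hvK : v ∈ K) {w : Fin n → ℝ} (hw : w ∈ interior K) : v + w ∈ interior K := by
  obtain ⟨hconv, hcone, -, -, -⟩ := hK
  have hsub : (fun z => v + z) '' interior K ⊆ K := by
    rintro _ ⟨s, hs, rfl⟩
    have hs' : s ∈ K := interior_subset hs
    have hmid : (1/2 : ℝ) • v + (1/2 : ℝ) • s ∈ K :=
      hconv hvK hs' (by norm_num) (by norm_num) (by norm_num)
    have h2 := hcone 2 (by norm_num) _ hmid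
    have : (2:ℝ) • ((1/2 : ℝ) • v + (1/2 : ℝ) • s) = v + s := by
      rw [smul_add, smul_smul, smul_smul]
      norm_num
    rwa [this] at h2
  have hopen : IsOpen ((fun z => v + z) '' interior K) :=
    (isOpenMap_add_left v) _ isOpen_interior
  exact interior_maximal hsub hopen ⟨w, hw, rfl⟩

lemma bilin_expand (B : (Fin n → ℝ) → (Fin n → ℝ) → ℝ)
    (hsym : ∀ z w, B z w = B w z)
    (hadd : ∀ z z' w, B (z + z') w = B z w + B z' w)
    (hsmul : ∀ (t : ℝ) z w, B (t • z) w = t * B z w)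
    (c c' : ℝ) (p q : Fin n → ℝ) :
    B (c • p + c' • q) (c • p + c' • q)
      = c^2 * B p p + 2*(c*c') * B p q + c'^2 * B q q := by
  have h1 : ∀ w, B w (c • p + c' • q) = c * B w p + c' * B w q := fun w => by
    rw [hsym, hadd, hsmul, hsmul, hsym p w, hsym q w]
  rw [hadd, hsmul, hsmul, h1, h1, hsym q p]
  ring

lemma pos_of_mul_pos_left' {c x : ℝ} (h : 0 < c * x) (hc : 0 < c) : 0 < x := by
  by_contra hx
  push_neg at hx
  nlinarith [mul_nonneg hc.le (neg_nonneg.mpr hx)]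

end Stmt18Aux

set_option maxHeartbeats 2000000

/-- Let `f` be a real homogeneous polynomial of degree `d ≥ 2`, `K ⊆ ℝⁿ`
a proper convex cone, `a` a point in the interior of `K`, and `v` a vector spanning an
extreme ray of `K`. If `D_a f` and `D_v f` are both `K`-completely log-concave, then
`D_{a+v} f` is `K`-completely log-concave. -/
theorem stmt18 {n : ℕ} (K : Set (Fin n → ℝ)) (hK : IsProperCone K) (d : ℕ) (hd : 2 ≤ d)
    (f : MvPolynomial (Fin n) ℝ) (hf : f.IsHomogeneous d)
    (a : Fin n → ℝ) (ha : a ∈ interior K) (v : Fin n → ℝ) (hv : SpansExtremeRay K v)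
    (haf : IsKCLC K (d - 1) (dirDeriv a f)) (hvf : IsKCLC K (d - 1) (dirDeriv v f)) :
    IsKCLC K (d - 1) (dirDeriv (a + v) f) := by
  intro L hL hLK x hx
  open Stmt18Aux in
  have hgoal_poly : L.foldr dirDeriv (dirDeriv (a + v) f)
      = L.foldr dirDeriv (dirDeriv a f) + L.foldr dirDeriv (dirDeriv v f) := by
    rw [dirDeriv_addD, foldr_add]
  open Stmt18Aux MvPolynomial in
  rw [hgoal_poly]
  set g := L.foldr dirDeriv (dirDeriv a f) with hgdef
  set h := L.foldr dirDeriv (dirDeriv v f) with hhdef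
  by_cases hg0 : g = 0
  · rw [hg0, zero_add]; exact hvf L hL hLK x hx
  by_cases hh0 : h = 0
  · rw [hh0, add_zero]; exact haf L hL hLK x hx
  obtain ⟨hvK, hvne, -⟩ := hv
  have haK : a ∈ K := interior_subset ha
  have hxK : x ∈ K := interior_subset hx
  -- homogeneity bookkeeping
  have hfd : f.IsHomogeneous ((d - 1) + 1) := by rwa [Nat.sub_add_cancel (by omega)]
  have hda : (dirDeriv a f).IsHomogeneous (d - 1) := dirDerivH hfd a
  have hdv : (dirDeriv v f).IsHomogeneous (d - 1) := dirDerivH hfd v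
  obtain ⟨m, hmk⟩ : ∃ m, m + L.length = d - 1 := ⟨d - 1 - L.length, by omega⟩
  have hgH : g.IsHomogeneous m := foldr_hom L (by rw [hmk]; exact hda)
  have hhH : h.IsHomogeneous m := foldr_hom L (by rw [hmk]; exact hdv)
  have hpH : (g + h).IsHomogeneous m := hgH.add hhH
  -- positivity at x
  have hgx : 0 < eval x g := (logConcave_ineq (haf L hL hLK x hx) hg0).1
  have hhx : 0 < eval x h := (logConcave_ineq (hvf L hL hLK x hx) hh0).1
  have hex : 0 < eval x (g + h) := by rw [map_add]; linarith
  apply logConcaveAt_of hex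
  intro u
  rcases Nat.lt_or_ge m 2 with hm2 | hm2
  · -- degenerate degrees 0 and 1
    have hzero : dirDeriv u (dirDeriv u (g + h)) = 0 := by
      rcases (by omega : m = 0 ∨ m = 1) with rfl | rfl
      · rw [dirDeriv_of_hom0 hpH, dirDeriv_zeroP]
      · rw [dirDeriv_of_hom0 (dirDerivH hpH u) u]
    rw [hzero, map_zero, mul_zero]
    positivity
  · obtain ⟨m', rfl⟩ : ∃ m', m = m' + 2 := ⟨m - 2, by omega⟩
    -- the bilinear forms
    set Bg : (Fin n → ℝ) → (Fin n → ℝ) → ℝ :=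
      fun z w => eval x (dirDeriv z (dirDeriv w g)) with hBgdef
    set Bh : (Fin n → ℝ) → (Fin n → ℝ) → ℝ :=
      fun z w => eval x (dirDeriv z (dirDeriv w h)) with hBhdef
    have hBgsym : ∀ z w, Bg z w = Bg w z := fun z w => by
      simp only [hBgdef]; rw [dirDeriv_comm]
    have hBhsym : ∀ z w, Bh z w = Bh w z := fun z w => by
      simp only [hBhdef]; rw [dirDeriv_comm]
    have hBgadd : ∀ z z' w, Bg (z + z') w = Bg z w + Bg z' w := fun z z' w => by
      simp only [hBgdef]; rw [dirDeriv_addD, map_add]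
    have hBhadd : ∀ z z' w, Bh (z + z') w = Bh z w + Bh z' w := fun z z' w => by
      simp only [hBhdef]; rw [dirDeriv_addD, map_add]
    have hBgsmul : ∀ (t : ℝ) z w, Bg (t • z) w = t * Bg z w := fun t z w => by
      simp only [hBgdef]; rw [dirDeriv_smulD, smul_eq_C_mul, eval_mul, eval_C]
    have hBhsmul : ∀ (t : ℝ) z w, Bh (t • z) w = t * Bh z w := fun t z w => by
      simp only [hBhdef]; rw [dirDeriv_smulD, smul_eq_C_mul, eval_mul, eval_C]
    -- the quadratics obtained by differentiating down to degree 2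
    set R : List (Fin n → ℝ) := List.replicate m' x with hRdef
    have hRlen : R.length = m' := by rw [hRdef, List.length_replicate]
    have hRK : ∀ w ∈ R, w ∈ K := by
      intro w hw
      rw [hRdef] at hw
      rw [List.eq_of_mem_replicate hw]
      exact hxK
    set qg := R.foldr dirDeriv g with hqgdef
    set qh := R.foldr dirDeriv h with hqhdef
    have hqgfold : (R ++ L).foldr dirDeriv (dirDeriv a f) = qg := by
      rw [List.foldr_append]
    have hqhfold : (R ++ L).foldr dirDeriv (dirDeriv v f) = qh := by
      rw [List.foldr_append]
    have hRLlen : (R ++ L).length ≤ d - 1 := by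
      rw [List.length_append, hRlen]; omega
    have hRLK : ∀ w ∈ R ++ L, w ∈ K := fun w hw => by
      rcases List.mem_append.mp hw with h' | h'
      · exact hRK w h'
      · exact hLK w h'
    set cB : ℝ := (m'.descFactorial m' : ℝ) with hcBdef
    have hcB : 0 < cB := by
      rw [hcBdef, Nat.descFactorial_self]
      exact_mod_cast Nat.factorial_pos m'
    -- conversion identities
    have hg2hom : ∀ z w : Fin n → ℝ, (dirDeriv z (dirDeriv w g)).IsHomogeneous m' :=
      fun z w => dirDerivH (dirDerivH hgH w) z
    have hh2hom : ∀ z w : Fin n → ℝ, (dirDeriv z (dirDeriv w h)).IsHomogeneous m' :=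
      fun z w => dirDerivH (dirDerivH hhH w) z
    have hqg2 : ∀ (z w y : Fin n → ℝ),
        eval y (dirDeriv z (dirDeriv w qg)) = cB * Bg z w := by
      intro z w y
      have hcomm : dirDeriv z (dirDeriv w qg) =
          R.foldr dirDeriv (dirDeriv z (dirDeriv w g)) := by
        rw [hqgdef, foldr_dirDeriv_comm, foldr_dirDeriv_comm]
      rw [hcomm, hRdef, foldr_replicate_eq_C x (hg2hom z w), eval_C]
    have hqh2 : ∀ (z w y : Fin n → ℝ),
        eval y (dirDeriv z (dirDeriv w qh)) = cB * Bh z w := by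
      intro z w y
      have hcomm : dirDeriv z (dirDeriv w qh) =
          R.foldr dirDeriv (dirDeriv z (dirDeriv w h)) := by
        rw [hqhdef, foldr_dirDeriv_comm, foldr_dirDeriv_comm]
      rw [hcomm, hRdef, foldr_replicate_eq_C x (hh2hom z w), eval_C]
    have hqgH : qg.IsHomogeneous 2 :=
      foldr_hom R (by rw [hRlen, Nat.add_comm]; exact hgH)
    have hqhH : qh.IsHomogeneous 2 :=
      foldr_hom R (by rw [hRlen, Nat.add_comm]; exact hhH)
    have hqg1 : ∀ (z y : Fin n → ℝ), eval y (dirDeriv z qg) = cB * Bg y z := by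
      intro z y
      have he := euler_eval (dirDerivH hqgH z) y
      rw [Nat.cast_one, one_mul] at he
      rw [← he, hqg2]
    have hqh1 : ∀ (z y : Fin n → ℝ), eval y (dirDeriv z qh) = cB * Bh y z := by
      intro z y
      have he := euler_eval (dirDerivH hqhH z) y
      rw [Nat.cast_one, one_mul] at he
      rw [← he, hqh2]
    have hqg0 : ∀ y : Fin n → ℝ, 2 * eval y qg = cB * Bg y y := by
      intro y
      have he := euler_eval hqgH y
      rw [hqg1] at he
      norm_num at he
      linarith
    have hqh0 : ∀ y : Fin n → ℝ, 2 * eval y qh = cB * Bh y y := by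
      intro y
      have he := euler_eval hqhH y
      rw [hqh1] at he
      norm_num at he
      linarith
    -- nonvanishing of the quadratics
    have hqgx : eval x qg = ((m' + 2).descFactorial m' : ℝ) * eval x g := by
      rw [hqgdef, hRdef]
      exact eval_foldr_replicate x m' 2 g hgH
    have hqhx : eval x qh = ((m' + 2).descFactorial m' : ℝ) * eval x h := by
      rw [hqhdef, hRdef]
      exact eval_foldr_replicate x m' 2 h hhH
    have hdF : (0:ℝ) < ((m' + 2).descFactorial m' : ℝ) := by
      have : m' + 2 ≥ m' := by omega
      have h0 : (m' + 2).descFactorial m' ≠ 0 := by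
        rw [Ne, Nat.descFactorial_eq_zero_iff_lt]; omega
      exact_mod_cast Nat.pos_of_ne_zero h0
    have hqgne : qg ≠ 0 := by
      intro h0
      rw [h0, map_zero] at hqgx
      nlinarith [mul_pos hdF hgx]
    have hqhne : qh ≠ 0 := by
      intro h0
      rw [h0, map_zero] at hqhx
      nlinarith [mul_pos hdF hhx]
    -- main quadratic inequalities from the CLC hypotheses
    have hHg : ∀ y ∈ interior K, 0 < Bg y y ∧ ∀ z, Bg y y * Bg z z ≤ 2 * (Bg y z)^2 := by
      intro y hy
      have hlc := haf (R ++ L) hRLlen hRLK y hy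
      rw [hqgfold] at hlc
      obtain ⟨hey, hin⟩ := logConcave_ineq hlc hqgne
      have h0 := hqg0 y
      have hyy : 0 < Bg y y := by
        refine pos_of_mul_pos_left' ?_ hcB
        linarith
      refine ⟨hyy, fun z => ?_⟩
      have h2 := hin z
      rw [hqg2 z z y, hqg1 z y] at h2
      have e1 : cB * cB * (Bg y y * Bg z z) = 2 * (eval y qg * (cB * Bg z z)) := by
        linear_combination (-(cB * Bg z z)) * h0
      have e2 : 2 * (eval y qg * (cB * Bg z z)) ≤ 2 * (cB * Bg y z)^2 := by linarith
      have e3 : 2 * (cB * Bg y z)^2 = cB * cB * (2 * (Bg y z)^2) := by ring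
      exact le_of_mul_le_mul_left (by linarith) (mul_pos hcB hcB)
    have hHh : ∀ y ∈ interior K, 0 < Bh y y ∧ ∀ z, Bh y y * Bh z z ≤ 2 * (Bh y z)^2 := by
      intro y hy
      have hlc := hvf (R ++ L) hRLlen hRLK y hy
      rw [hqhfold] at hlc
      obtain ⟨hey, hin⟩ := logConcave_ineq hlc hqhne
      have h0 := hqh0 y
      have hyy : 0 < Bh y y := by
        refine pos_of_mul_pos_left' ?_ hcB
        linarith
      refine ⟨hyy, fun z => ?_⟩
      have h2 := hin z
      rw [hqh2 z z y, hqh1 z y] at h2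
      have e1 : cB * cB * (Bh y y * Bh z z) = 2 * (eval y qh * (cB * Bh z z)) := by
        linear_combination (-(cB * Bh z z)) * h0
      have e2 : 2 * (eval y qh * (cB * Bh z z)) ≤ 2 * (cB * Bh y z)^2 := by linarith
      have e3 : 2 * (cB * Bh y z)^2 = cB * cB * (2 * (Bh y z)^2) := by ring
      exact le_of_mul_le_mul_left (by linarith) (mul_pos hcB hcB)
    -- Bg v v is nonnegative
    have hBgvv : 0 ≤ Bg v v := by
      have hlen : (v :: v :: (R ++ L)).length ≤ d - 1 := by
        simp only [List.length_cons, List.length_append, hRlen]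
        omega
      have hmem : ∀ w ∈ v :: v :: (R ++ L), w ∈ K := by
        intro w hw
        rcases List.mem_cons.mp hw with rfl | hw'
        · exact hvK
        rcases List.mem_cons.mp hw' with rfl | hw''
        · exact hvK
        · exact hRLK w hw''
      have hlc := haf (v :: v :: (R ++ L)) hlen hmem x hx
      have hform : (v :: v :: (R ++ L)).foldr dirDeriv (dirDeriv a f)
          = dirDeriv v (dirDeriv v qg) := by
        simp only [List.foldr_cons, hqgfold]
      rw [hform] at hlc
      rcases hlc with h0 | ⟨hpos, -⟩
      · have h1 : eval x (dirDeriv v (dirDeriv v qg)) = 0 := by rw [h0, map_zero]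
        rw [hqg2 v v x] at h1
        rcases mul_eq_zero.mp h1 with h' | h'
        · exact absurd h' (ne_of_gt hcB)
        · rw [h']
      · rw [hqg2 v v x] at hpos
        exact (pos_of_mul_pos_left' hpos hcB).le
    -- the linking identity
    have hlink : ∀ z, Bg v z = Bh a z := by
      intro z
      have hgF : g = dirDeriv a (L.foldr dirDeriv f) := foldr_dirDeriv_comm L a f
      have hhF : h = dirDeriv v (L.foldr dirDeriv f) := foldr_dirDeriv_comm L v f
      simp only [hBgdef, hBhdef]
      rw [hgF, hhF]
      set F := L.foldr dirDeriv f
      have key : dirDeriv v (dirDeriv z (dirDeriv a F))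
          = dirDeriv a (dirDeriv z (dirDeriv v F)) := by
        calc dirDeriv v (dirDeriv z (dirDeriv a F))
            = dirDeriv v (dirDeriv a (dirDeriv z F)) := by rw [dirDeriv_comm z a]
          _ = dirDeriv a (dirDeriv v (dirDeriv z F)) := dirDeriv_comm v a _
          _ = dirDeriv a (dirDeriv z (dirDeriv v F)) := by rw [dirDeriv_comm v z]
      rw [key]
    obtain ⟨hBhaa, hHha⟩ := hHh a ha
    obtain ⟨hBgaa, -⟩ := hHg a ha
    have hva : 0 < Bg v a := by rw [hlink a]; exact hBhaa
    -- negative semidefiniteness of Bg on the hyperplane (Bg v ·) = 0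
    have hS1 : ∀ z, Bg v z = 0 → Bg z z ≤ 0 := by
      intro z hz
      by_contra hposz
      push_neg at hposz
      have key : ∀ t : ℝ, 0 < t → Bg v a * Bg z z ≤ t * (Bg a z)^2 := by
        intro t ht
        have hyt : v + t • a ∈ interior K :=
          add_mem_interior hK hvK (smul_mem_interior hK ht ha)
        obtain ⟨-, hineq⟩ := hHg _ hyt
        have hineq' := hineq z
        have hrw : v + t • a = (1:ℝ) • v + t • a := by rw [one_smul]
        have e2 : Bg (v + t • a) (v + t • a)
            = 1^2 * Bg v v + 2*(1*t) * Bg v a + t^2 * Bg a a := by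
          rw [hrw]; exact bilin_expand Bg hBgsym hBgadd hBgsmul 1 t v a
        have e1 : Bg (v + t • a) z = Bg v z + t * Bg a z := by
          rw [hBgadd, hBgsmul]
        rw [e2, e1, hz, zero_add] at hineq'
        have h1 : 2*t*(Bg v a * Bg z z) ≤ 2*t*(t*(Bg a z)^2) := by
          nlinarith [mul_nonneg hBgvv hposz.le,
            mul_nonneg (mul_nonneg (sq_nonneg t) hBgaa.le) hposz.le]
        exact le_of_mul_le_mul_left h1 (by positivity)
      have hfin : Bg v a * Bg z z ≤ 0 := by
        rcases eq_or_lt_of_le (sq_nonneg (Bg a z)) with hc0 | hcpos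
        · have h1 := key 1 one_pos
          rw [← hc0] at h1
          linarith
        · by_contra hA
          push_neg at hA
          have h1 := key ((Bg v a * Bg z z) / (2 * (Bg a z)^2)) (by positivity)
          have hne : (Bg a z)^2 ≠ 0 := by positivity
          have h2 : (Bg v a * Bg z z) / (2 * (Bg a z)^2) * (Bg a z)^2
              = (Bg v a * Bg z z) / 2 := by
            rw [div_mul_eq_mul_div, mul_div_mul_right _ _ hne]
          rw [h2] at h1
          linarith
      nlinarith [mul_pos hva hposz]
    -- negative semidefiniteness of Bh on the same hyperplane
    have hS2 : ∀ z, Bg v z = 0 → Bh z z ≤ 0 := by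
      intro z hz
      rw [hlink z] at hz
      have h1 := hHha z
      rw [hz] at h1
      nlinarith [h1, hBhaa, sq_nonneg (Bh a z)]
    have hker : ∀ z, Bg v z = 0 → Bg z z + Bh z z ≤ 0 :=
      fun z hz => add_nonpos (hS1 z hz) (hS2 z hz)
    -- kernel of (C x ·) is also negative
    obtain ⟨hBgxx, -⟩ := hHg x hx
    obtain ⟨hBhxx, -⟩ := hHh x hx
    have hxxpos : 0 < Bg x x + Bh x x := by linarith
    have hNSDx : ∀ z, Bg x z + Bh x z = 0 → Bg z z + Bh z z ≤ 0 := by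
      intro z hz
      by_contra hzz
      push_neg at hzz
      set w : Fin n → ℝ := Bg v z • x + (-(Bg v x)) • z with hwdef
      have hw : Bg v w = 0 := by
        rw [hBgsym v w, hwdef, hBgadd, hBgsmul, hBgsmul, hBgsym x v, hBgsym z v]
        ring
      have hCw := hker w hw
      have eg : Bg w w = (Bg v z)^2 * Bg x x + 2*((Bg v z)*(-(Bg v x))) * Bg x z
          + (-(Bg v x))^2 * Bg z z :=
        bilin_expand Bg hBgsym hBgadd hBgsmul _ _ x z
      have eh : Bh w w = (Bg v z)^2 * Bh x x + 2*((Bg v z)*(-(Bg v x))) * Bh x z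
          + (-(Bg v x))^2 * Bh z z :=
        bilin_expand Bh hBhsym hBhadd hBhsmul _ _ x z
      have hz2 : 2*((Bg v z)*(-(Bg v x))) * (Bg x z + Bh x z) = 0 := by
        rw [hz]; ring
      have hsum : (Bg v z)^2 * (Bg x x + Bh x x)
          + (-(Bg v x))^2 * (Bg z z + Bh z z) ≤ 0 := by
        nlinarith [hCw, eg, eh, hz2]
      have hvz0 : Bg v z = 0 := by
        have h1 : (Bg v z)^2 * (Bg x x + Bh x x) ≤ 0 := by
          nlinarith [mul_nonneg (sq_nonneg (-(Bg v x))) hzz.le]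
        have h2 : (Bg v z)^2 ≤ 0 := by
          by_contra hcon
          push_neg at hcon
          nlinarith [mul_pos hcon hxxpos]
        have h3 : (Bg v z)^2 = 0 := le_antisymm h2 (sq_nonneg _)
        exact pow_eq_zero_iff (by norm_num) |>.mp h3
      have := hker z hvz0
      linarith
    -- final Cauchy–Schwarz style bound
    have hfin : ∀ z, (Bg z z + Bh z z) * (Bg x x + Bh x x) ≤ (Bg x z + Bh x z)^2 := by
      intro z
      set t : ℝ := (Bg x z + Bh x z) / (Bg x x + Bh x x) with htdef
      set r : Fin n → ℝ := z + (-t) • x with hrdef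
      have hxr : Bg x r + Bh x r = 0 := by
        have hg' : Bg x r = Bg x z + (-t) * Bg x x := by
          rw [hrdef, hBgsym x _, hBgadd, hBgsmul, hBgsym z x, hBgsym x x]
        have hh' : Bh x r = Bh x z + (-t) * Bh x x := by
          rw [hrdef, hBhsym x _, hBhadd, hBhsmul, hBhsym z x, hBhsym x x]
        rw [hg', hh', htdef]
        field_simp
        ring
      have hrr := hNSDx r hxr
      have hzg : Bg z z = Bg r r + 2*t*(Bg x r) + t^2 * Bg x x := by
        have hzr : z = r + t • x := by
          rw [hrdef]
          ext i
          simp [neg_smul]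
        rw [hzr]
        have : r + t • x = (1:ℝ) • r + t • x := by rw [one_smul]
        rw [this, bilin_expand Bg hBgsym hBgadd hBgsmul 1 t r x]
        rw [hBgsym r x]
        ring
      have hzh : Bh z z = Bh r r + 2*t*(Bh x r) + t^2 * Bh x x := by
        have hzr : z = r + t • x := by
          rw [hrdef]
          ext i
          simp [neg_smul]
        rw [hzr]
        have : r + t • x = (1:ℝ) • r + t • x := by rw [one_smul]
        rw [this, bilin_expand Bh hBhsym hBhadd hBhsmul 1 t r x]
        rw [hBhsym r x]
        ring
      have ht2 : t * (Bg x x + Bh x x) = Bg x z + Bh x z := by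
        rw [htdef]
        field_simp
      have hcrr : (Bg r r + Bh r r) * (Bg x x + Bh x x) ≤ 0 := by
        nlinarith [mul_nonneg (neg_nonneg.mpr hrr) hxxpos.le]
      have hzgx : Bg z z * (Bg x x + Bh x x)
          = (Bg r r + 2*t*(Bg x r) + t^2 * Bg x x) * (Bg x x + Bh x x) := by rw [hzg]
      have hzhx : Bh z z * (Bg x x + Bh x x)
          = (Bh r r + 2*t*(Bh x r) + t^2 * Bh x x) * (Bg x x + Bh x x) := by rw [hzh]
      have hxr2 : 2*t*((Bg x r + Bh x r) * (Bg x x + Bh x x)) = 0 := by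
        rw [hxr]; ring
      have ht3 : (t * (Bg x x + Bh x x)) * (t * (Bg x x + Bh x x))
          = (Bg x z + Bh x z)^2 := by rw [ht2]; ring
      nlinarith [hcrr, hzgx, hzhx, hxr2, ht3]
    -- translate back to the polynomial inequality
    have hBp : ∀ z w : Fin n → ℝ,
        eval x (dirDeriv z (dirDeriv w (g + h))) = Bg z w + Bh z w := by
      intro z w
      rw [dirDeriv_addP, dirDeriv_addP, map_add]
    have heuler1 : eval x (dirDeriv x (dirDeriv u (g + h)))
        = ((m' + 1 : ℕ) : ℝ) * eval x (dirDeriv u (g + h)) :=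
      euler_eval (dirDerivH hpH u) x
    have heuler0 : eval x (dirDeriv x (g + h)) = ((m' + 2 : ℕ) : ℝ) * eval x (g + h) :=
      euler_eval hpH x
    have hxu : Bg x u + Bh x u = ((m' + 1 : ℕ) : ℝ) * eval x (dirDeriv u (g + h)) := by
      rw [← hBp x u]; exact heuler1
    have hxx : Bg x x + Bh x x
        = ((m' + 1 : ℕ) : ℝ) * (((m' + 2 : ℕ) : ℝ) * eval x (g + h)) := by
      rw [← hBp x x]
      have := euler_eval (dirDerivH hpH x) x
      rw [this, heuler0]
    have huu : eval x (dirDeriv u (dirDeriv u (g + h))) = Bg u u + Bh u u := hBp u u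
    have hfinu := hfin u
    rw [huu]
    set γ : ℝ := eval x (dirDeriv u (g + h)) with hγdef
    set e : ℝ := eval x (g + h) with hedef
    have hM1 : (0:ℝ) < ((m' + 1 : ℕ) : ℝ) := by positivity
    have hM2 : (0:ℝ) < ((m' + 2 : ℕ) : ℝ) := by positivity
    rw [hxu, hxx] at hfinu
    have hstep1 : ((m' + 1 : ℕ) : ℝ) * (((m' + 2 : ℕ) : ℝ) * (e * (Bg u u + Bh u u)))
        ≤ ((m' + 1 : ℕ) : ℝ) * (((m' + 1 : ℕ) : ℝ) * γ^2) := by nlinarith [hfinu]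
    have hstep2 : ((m' + 2 : ℕ) : ℝ) * (e * (Bg u u + Bh u u))
        ≤ ((m' + 1 : ℕ) : ℝ) * γ^2 := le_of_mul_le_mul_left hstep1 hM1
    have hcast : ((m' + 1 : ℕ) : ℝ) ≤ ((m' + 2 : ℕ) : ℝ) := by
      exact_mod_cast (by omega : m' + 1 ≤ m' + 2)
    have hstep3 : ((m' + 2 : ℕ) : ℝ) * (e * (Bg u u + Bh u u))
        ≤ ((m' + 2 : ℕ) : ℝ) * γ^2 := by
      nlinarith [mul_le_mul_of_nonneg_right hcast (sq_nonneg γ)]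
    have := le_of_mul_le_mul_left hstep3 hM2
    linarith
end
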